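/- For every integer n ≥ 1, every real number Ŝ, and all positive real constants C and C′, there exist a constant C₂ > 0 and a real number ℓ₀ ≥ 1, depending only on n, Ŝ, C, C′, with the following property. Let (X, 𝒜) be a measurable space with finite measures μ and ν, let ℓ ≥ ℓ₀, let N ≥ 1, let f₁, …, f_N : X → ℝ be nonnegative bounded measurable functions, and let b₁, …, b_N be reals, not all zero. Set γᵢ := ∫_X fᵢ dμ and B := Σᵢ fᵢ. Assume: (i) Σᵢ bᵢγᵢ = 0 and γᵢ ≤ 2 for every i; (ii) |n!·B(x) − ℓⁿ − (Ŝ/2)·ℓ^{n−1}| ≤ C·ℓ^{n−2} for every x ∈ X; (iii) (ℓ − C′ℓ^{−2})ⁿ·μ(A) ≤ ν(A) ≤ (ℓ + C′ℓ^{−2})ⁿ·μ(A) for every measurable set A. Then |(ℓ / Σᵢ|bᵢ|) · ∫_X B(x)^{−1}(Σᵢ bᵢ fᵢ(x)) dν(x)| ≤ C₂/ℓ. -/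

import Mathlib

open MeasureTheory Finset



private lemma integrable_of_abs_le {X : Type*} [MeasurableSpace X] (μ : Measure X)
    [IsFiniteMeasure μ] {h : X → ℝ} (hm : Measurable h) {M : ℝ} (hb : ∀ x, |h x| ≤ M) :
    Integrable h μ :=
  Integrable.mono' (integrable_const M) hm.aestronglyMeasurable (ae_of_all _ hb)

private lemma int_le_smul {X : Type*} [MeasurableSpace X] {μ ν : Measure X}
    {a : ℝ} (ha : 0 ≤ a) (hle : ν ≤ ENNReal.ofReal a • μ) {h : X → ℝ}
    (h0 : ∀ x, 0 ≤ h x) (hmeas : Measurable h) (hint : Integrable h μ) :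
    ∫ x, h x ∂ν ≤ a * ∫ x, h x ∂μ := by
  rw [integral_eq_lintegral_of_nonneg_ae (ae_of_all _ h0) hmeas.aestronglyMeasurable,
    integral_eq_lintegral_of_nonneg_ae (ae_of_all _ h0) hmeas.aestronglyMeasurable]
  have hfin : ∫⁻ x, ENNReal.ofReal (h x) ∂μ ≠ ⊤ := hint.lintegral_lt_top.ne
  have h1 : ∫⁻ x, ENNReal.ofReal (h x) ∂ν ≤ ENNReal.ofReal a * ∫⁻ x, ENNReal.ofReal (h x) ∂μ := by
    calc ∫⁻ x, ENNReal.ofReal (h x) ∂ν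
        ≤ ∫⁻ x, ENNReal.ofReal (h x) ∂(ENNReal.ofReal a • μ) := lintegral_mono' hle le_rfl
      _ = ENNReal.ofReal a * ∫⁻ x, ENNReal.ofReal (h x) ∂μ := lintegral_smul_measure _ _
  calc (∫⁻ x, ENNReal.ofReal (h x) ∂ν).toReal
      ≤ (ENNReal.ofReal a * ∫⁻ x, ENNReal.ofReal (h x) ∂μ).toReal :=
        ENNReal.toReal_mono (ENNReal.mul_ne_top ENNReal.ofReal_ne_top hfin) h1
    _ = a * (∫⁻ x, ENNReal.ofReal (h x) ∂μ).toReal := by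
        rw [ENNReal.toReal_mul, ENNReal.toReal_ofReal ha]

private lemma smul_le_int {X : Type*} [MeasurableSpace X] {μ ν : Measure X}
    {a : ℝ} (ha : 0 ≤ a) (hle : ENNReal.ofReal a • μ ≤ ν) {h : X → ℝ}
    (h0 : ∀ x, 0 ≤ h x) (hmeas : Measurable h) (hint : Integrable h ν) :
    a * ∫ x, h x ∂μ ≤ ∫ x, h x ∂ν := by
  rw [integral_eq_lintegral_of_nonneg_ae (ae_of_all _ h0) hmeas.aestronglyMeasurable,
    integral_eq_lintegral_of_nonneg_ae (ae_of_all _ h0) hmeas.aestronglyMeasurable]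
  have hfin : ∫⁻ x, ENNReal.ofReal (h x) ∂ν ≠ ⊤ := hint.lintegral_lt_top.ne
  have h1 : ENNReal.ofReal a * ∫⁻ x, ENNReal.ofReal (h x) ∂μ ≤ ∫⁻ x, ENNReal.ofReal (h x) ∂ν := by
    calc ENNReal.ofReal a * ∫⁻ x, ENNReal.ofReal (h x) ∂μ
        = ∫⁻ x, ENNReal.ofReal (h x) ∂(ENNReal.ofReal a • μ) := by
          rw [lintegral_smul_measure, smul_eq_mul]
      _ ≤ ∫⁻ x, ENNReal.ofReal (h x) ∂ν := lintegral_mono' hle le_rfl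
  calc a * (∫⁻ x, ENNReal.ofReal (h x) ∂μ).toReal
      = (ENNReal.ofReal a * ∫⁻ x, ENNReal.ofReal (h x) ∂μ).toReal := by
        rw [ENNReal.toReal_mul, ENNReal.toReal_ofReal ha]
    _ ≤ (∫⁻ x, ENNReal.ofReal (h x) ∂ν).toReal := ENNReal.toReal_mono hfin h1

private lemma pow_sub_pow_le' {a b : ℝ} (n : ℕ) (hb : 0 ≤ b) (hba : b ≤ a) :
    a ^ n - b ^ n ≤ n * a ^ (n - 1) * (a - b) := by
  have ha : 0 ≤ a := hb.trans hba
  have key := geom_sum₂_mul a b n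
  have hsum : (∑ i ∈ range n, a ^ i * b ^ (n - 1 - i)) ≤ n * a ^ (n - 1) := by
    calc (∑ i ∈ range n, a ^ i * b ^ (n - 1 - i))
        ≤ ∑ _i ∈ range n, a ^ (n - 1) := by
          apply Finset.sum_le_sum
          intro i hi
          have hi' : i ≤ n - 1 := Nat.le_sub_one_of_lt (Finset.mem_range.mp hi)
          calc a ^ i * b ^ (n - 1 - i) ≤ a ^ i * a ^ (n - 1 - i) :=
                mul_le_mul_of_nonneg_left (pow_le_pow_left₀ hb hba _) (pow_nonneg ha _)
            _ = a ^ (n - 1) := by rw [← pow_add, Nat.add_sub_cancel' hi']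
      _ = n * a ^ (n - 1) := by rw [Finset.sum_const, Finset.card_range, nsmul_eq_mul]
  nlinarith [mul_le_mul_of_nonneg_right hsum (sub_nonneg.mpr hba)]

private lemma integral_compare {X : Type*} [MeasurableSpace X] {μ ν : Measure X}
    [IsFiniteMeasure μ] [IsFiniteMeasure ν] {a₁ a₂ t : ℝ}
    (h1 : 0 ≤ a₁) (h1t : a₁ ≤ t) (ht2 : t ≤ a₂)
    (hlo : ENNReal.ofReal a₁ • μ ≤ ν) (hhi : ν ≤ ENNReal.ofReal a₂ • μ)
    {g : X → ℝ} (hg : Measurable g) {M : ℝ} (hb : ∀ x, |g x| ≤ M) :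
    |∫ x, g x ∂ν - t * ∫ x, g x ∂μ| ≤ (a₂ - a₁) * ∫ x, |g x| ∂μ := by
  have h2 : 0 ≤ a₂ := h1.trans (h1t.trans ht2)
  set p : X → ℝ := fun x => max (g x) 0 with hp
  set q : X → ℝ := fun x => max (-g x) 0 with hq
  have hpm : Measurable p := hg.max measurable_const
  have hqm : Measurable q := hg.neg.max measurable_const
  have hp0 : ∀ x, 0 ≤ p x := fun x => le_max_right _ _
  have hq0 : ∀ x, 0 ≤ q x := fun x => le_max_right _ _
  have hpb : ∀ x, |p x| ≤ M := fun x => by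
    rw [abs_of_nonneg (hp0 x)]
    exact max_le ((le_abs_self _).trans (hb x)) ((abs_nonneg _).trans (hb x))
  have hqb : ∀ x, |q x| ≤ M := fun x => by
    rw [abs_of_nonneg (hq0 x)]
    exact max_le ((neg_le_abs _).trans (hb x)) ((abs_nonneg _).trans (hb x))
  have hpμ : Integrable p μ := integrable_of_abs_le μ hpm hpb
  have hqμ : Integrable q μ := integrable_of_abs_le μ hqm hqb
  have hpν : Integrable p ν := integrable_of_abs_le ν hpm hpb
  have hqν : Integrable q ν := integrable_of_abs_le ν hqm hqb
  have epq : ∀ x, p x - q x = g x := fun x => max_zero_sub_max_neg_zero_eq_self (g x)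
  have eabs : ∀ x, p x + q x = |g x| := fun x => max_zero_add_max_neg_zero_eq_abs_self (g x)
  have hgν : ∫ x, g x ∂ν = (∫ x, p x ∂ν) - ∫ x, q x ∂ν := by
    rw [← integral_sub hpν hqν]; simp_rw [epq]
  have hgμ : ∫ x, g x ∂μ = (∫ x, p x ∂μ) - ∫ x, q x ∂μ := by
    rw [← integral_sub hpμ hqμ]; simp_rw [epq]
  have habsμ : ∫ x, |g x| ∂μ = (∫ x, p x ∂μ) + ∫ x, q x ∂μ := by
    rw [← integral_add hpμ hqμ]; simp_rw [eabs]
  have hPl : a₁ * ∫ x, p x ∂μ ≤ ∫ x, p x ∂ν := smul_le_int h1 hlo hp0 hpm hpν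
  have hPu : ∫ x, p x ∂ν ≤ a₂ * ∫ x, p x ∂μ := int_le_smul h2 hhi hp0 hpm hpμ
  have hQl : a₁ * ∫ x, q x ∂μ ≤ ∫ x, q x ∂ν := smul_le_int h1 hlo hq0 hqm hqν
  have hQu : ∫ x, q x ∂ν ≤ a₂ * ∫ x, q x ∂μ := int_le_smul h2 hhi hq0 hqm hqμ
  have hP0 : 0 ≤ ∫ x, p x ∂μ := integral_nonneg hp0
  have hQ0 : 0 ≤ ∫ x, q x ∂μ := integral_nonneg hq0
  rw [hgν, hgμ, habsμ, abs_le]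
  constructor
  · nlinarith [mul_nonneg (sub_nonneg.mpr h1t) hP0, mul_nonneg (sub_nonneg.mpr ht2) hQ0]
  · nlinarith [mul_nonneg (sub_nonneg.mpr ht2) hP0, mul_nonneg (sub_nonneg.mpr h1t) hQ0]

private lemma pos_right_of_mul {a b : ℝ} (ha : 0 < a) (h : 0 < a * b) : 0 < b := by
  have := div_pos h ha
  rwa [mul_div_cancel_left₀ _ ha.ne'] at this


set_option maxHeartbeats 1000000 in
/-- Measure-theoretic core of Theorem 8.1: under the extremal-metric Bergman
kernel expansion, the normalized Chow-norm derivative at `s = 0` is `O(ℓ⁻¹)`. -/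
theorem stmt_5 (n : ℕ) (hn : 1 ≤ n) (Shat : ℝ) (C C' : ℝ) (hC : 0 < C) (hC' : 0 < C') :
    ∃ (C₂ : ℝ) (ℓ₀ : ℝ), 0 < C₂ ∧ 1 ≤ ℓ₀ ∧
      ∀ (X : Type*) [MeasurableSpace X] (μ ν : Measure X),
        IsFiniteMeasure μ → IsFiniteMeasure ν →
        ∀ ℓ : ℝ, ℓ₀ ≤ ℓ →
        ∀ N : ℕ, 1 ≤ N →
        ∀ (f : Fin N → X → ℝ) (b : Fin N → ℝ),
        (∀ i x, 0 ≤ f i x) →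
        (∀ i, ∃ M : ℝ, ∀ x, f i x ≤ M) →
        (∀ i, Measurable (f i)) →
        b ≠ 0 →
        (∑ i, b i * ∫ x, f i x ∂μ) = 0 →
        (∀ i, (∫ x, f i x ∂μ) ≤ 2) →
        (∀ x, |(n.factorial : ℝ) * (∑ i, f i x) - ℓ ^ (n : ℤ) - (Shat / 2) * ℓ ^ ((n : ℤ) - 1)|
          ≤ C * ℓ ^ ((n : ℤ) - 2)) →
        (∀ A : Set X, MeasurableSet A →
          ENNReal.ofReal ((ℓ - C' / ℓ ^ 2) ^ n) * μ A ≤ ν A ∧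
          ν A ≤ ENNReal.ofReal ((ℓ + C' / ℓ ^ 2) ^ n) * μ A) →
        |(ℓ / ∑ i, |b i|) * ∫ x, (∑ i, f i x)⁻¹ * (∑ i, b i * f i x) ∂ν| ≤ C₂ / ℓ := by
  have hF : (0:ℝ) < n.factorial := by exact_mod_cast n.factorial_pos
  refine ⟨8 * (n.factorial : ℝ) * C + 4 * (n.factorial : ℝ) * n * 2 ^ n * C',
    1 + |Shat| + 2 * C + C', ?_, ?_, ?_⟩
  · have h2 : (0:ℝ) ≤ 4 * (n.factorial : ℝ) * n * 2 ^ n * C' := by positivity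
    nlinarith [mul_pos (mul_pos (by norm_num : (0:ℝ) < 8) hF) hC]
  · linarith [abs_nonneg Shat]
  intro X _ μ ν hμfin hνfin ℓ hℓ N hN f b hf0 hfM hfm hb0 horth hγ2 hBexp hcmp
  haveI := hμfin; haveI := hνfin
  set F : ℝ := (n.factorial : ℝ) with hFdef
  have hFpos : 0 < F := by rw [hFdef]; exact hF
  clear_value F
  set S : ℝ := ∑ i, |b i| with hSdef
  have hS : 0 < S := by
    obtain ⟨i, hi⟩ := Function.ne_iff.mp hb0
    rw [hSdef]
    exact lt_of_lt_of_le (abs_pos.mpr hi)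
      (Finset.single_le_sum (fun j _ => abs_nonneg (b j)) (Finset.mem_univ i))
  have hℓ1 : 1 ≤ ℓ := by linarith [abs_nonneg Shat]
  have hℓ0 : 0 < ℓ := by linarith
  have hu : 0 < ℓ ^ n := pow_pos hℓ0 n
  -- zpow conversions
  have hz0 : ℓ ^ (n : ℤ) = ℓ ^ n := zpow_natCast ℓ n
  have hz1 : ℓ ^ ((n : ℤ) - 1) = ℓ ^ n / ℓ := by
    rw [zpow_sub₀ hℓ0.ne', zpow_natCast, zpow_one]
  have hz2 : ℓ ^ ((n : ℤ) - 2) = ℓ ^ n / ℓ ^ 2 := by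
    rw [zpow_sub₀ hℓ0.ne', zpow_natCast, show (2:ℤ) = ((2:ℕ):ℤ) from rfl, zpow_natCast]
  have hexp : ∀ x, |F * (∑ i, f i x) - ℓ ^ n - Shat / 2 * (ℓ ^ n / ℓ)| ≤ C * (ℓ ^ n / ℓ ^ 2) := by
    intro x; have := hBexp x; rwa [hz0, hz1, hz2] at this
  -- basic inequalities
  have hd1pos : 0 < ℓ ^ n / ℓ := by positivity
  have hd2pos : 0 < ℓ ^ n / ℓ ^ 2 := by positivity
  have hd21 : C * (ℓ ^ n / ℓ ^ 2) ≤ C * (ℓ ^ n / ℓ) := by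
    apply mul_le_mul_of_nonneg_left _ hC.le
    apply div_le_div_of_nonneg_left hu.le hℓ0
    nlinarith
  have hkey : (|Shat| + 2 * C) * (ℓ ^ n / ℓ) ≤ ℓ ^ n := by
    have h1 : |Shat| + 2 * C ≤ ℓ := by linarith
    calc (|Shat| + 2 * C) * (ℓ ^ n / ℓ) ≤ ℓ * (ℓ ^ n / ℓ) :=
          mul_le_mul_of_nonneg_right h1 hd1pos.le
      _ = ℓ ^ n := by field_simp
  have hBlow : ∀ x, ℓ ^ n ≤ 2 * (F * (∑ i, f i x)) := by
    intro x
    have h := abs_le.mp (hexp x)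
    have h1 : -|Shat| * (ℓ ^ n / ℓ) ≤ Shat * (ℓ ^ n / ℓ) :=
      mul_le_mul_of_nonneg_right (neg_abs_le Shat) hd1pos.le
    linarith [h.1]
  have hBpos : ∀ x, 0 < (∑ i, f i x) := by
    intro x
    refine pos_right_of_mul hFpos ?_
    nlinarith [hBlow x]
  have hBinvle : ∀ x, (∑ i, f i x)⁻¹ ≤ 2 * F / ℓ ^ n := by
    intro x
    have h1 : ℓ ^ n / (2 * F) ≤ ∑ i, f i x := by
      rw [div_le_iff₀ (by positivity)]; linarith [hBlow x]
    calc (∑ i, f i x)⁻¹ = 1 / (∑ i, f i x) := (one_div _).symm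
      _ ≤ 1 / (ℓ ^ n / (2 * F)) := one_div_le_one_div_of_le (by positivity) h1
      _ = 2 * F / ℓ ^ n := one_div_div _ _
  -- the constant c
  obtain ⟨c, hcdef⟩ : ∃ c : ℝ, c = (ℓ ^ n + Shat / 2 * (ℓ ^ n / ℓ)) / F := ⟨_, rfl⟩
  have hFc : F * c = ℓ ^ n + Shat / 2 * (ℓ ^ n / ℓ) := by
    rw [hcdef]; field_simp
  have hclow : ℓ ^ n ≤ 2 * (F * c) := by
    have h1 : -|Shat| * (ℓ ^ n / ℓ) ≤ Shat * (ℓ ^ n / ℓ) :=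
      mul_le_mul_of_nonneg_right (neg_abs_le Shat) hd1pos.le
    have h2 : 0 ≤ 2 * C * (ℓ ^ n / ℓ) := by positivity
    rw [hFc]; linarith
  have hc0 : 0 < c := by
    refine pos_right_of_mul hFpos ?_
    linarith
  have hcinvle : c⁻¹ ≤ 2 * F / ℓ ^ n := by
    have h1 : ℓ ^ n / (2 * F) ≤ c := by
      rw [div_le_iff₀ (by positivity)]; nlinarith
    calc c⁻¹ = 1 / c := (one_div _).symm
      _ ≤ 1 / (ℓ ^ n / (2 * F)) := one_div_le_one_div_of_le (by positivity) h1
      _ = 2 * F / ℓ ^ n := one_div_div _ _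
  have hBc : ∀ x, |(∑ i, f i x) - c| ≤ C * (ℓ ^ n / ℓ ^ 2) / F := by
    intro x
    have h := hexp x
    have e : F * (∑ i, f i x) - ℓ ^ n - Shat / 2 * (ℓ ^ n / ℓ) = F * ((∑ i, f i x) - c) := by
      rw [mul_sub, hFc]; ring
    rw [e, abs_mul, abs_of_pos hFpos] at h
    rw [le_div_iff₀ hFpos]
    linarith [h]
  have hinv : ∀ x, |(∑ i, f i x)⁻¹ - c⁻¹|
      ≤ 2 * F / ℓ ^ n * (2 * F / ℓ ^ n) * (C * (ℓ ^ n / ℓ ^ 2) / F) := by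
    intro x
    have hbne : (∑ i, f i x) ≠ 0 := (hBpos x).ne'
    have e : (∑ i, f i x)⁻¹ - c⁻¹ = (∑ i, f i x)⁻¹ * c⁻¹ * (c - (∑ i, f i x)) := by
      field_simp
    rw [e, abs_mul, abs_mul, abs_inv, abs_inv, abs_of_pos (hBpos x), abs_of_pos hc0]
    have h1 : |c - (∑ i, f i x)| ≤ C * (ℓ ^ n / ℓ ^ 2) / F := by
      rw [abs_sub_comm]; exact hBc x
    exact mul_le_mul (mul_le_mul (hBinvle x) hcinvle (inv_nonneg.mpr hc0.le) (by positivity))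
      h1 (abs_nonneg _) (by positivity)
  -- integrability and measurability
  have hfint : ∀ i, Integrable (f i) μ := by
    intro i
    obtain ⟨M, hM⟩ := hfM i
    exact integrable_of_abs_le μ (hfm i)
      (fun x => by rw [abs_of_nonneg (hf0 i x)]; exact hM x)
  have hBm : Measurable (fun x => ∑ i, f i x) := Finset.measurable_sum _ (fun i _ => hfm i)
  have hhm : Measurable (fun x => ∑ i, b i * f i x) :=
    Finset.measurable_sum _ (fun i _ => (hfm i).const_mul (b i))
  have hAint : Integrable (fun x => ∑ i, |b i| * f i x) μ :=
    integrable_finset_sum _ (fun i _ => (hfint i).const_mul _)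
  have hhint : Integrable (fun x => ∑ i, b i * f i x) μ :=
    integrable_finset_sum _ (fun i _ => (hfint i).const_mul _)
  have hhabs : ∀ x, |∑ i, b i * f i x| ≤ ∑ i, |b i| * f i x := by
    intro x
    calc |∑ i, b i * f i x| ≤ ∑ i, |b i * f i x| := Finset.abs_sum_le_sum_abs _ _
      _ = ∑ i, |b i| * f i x := Finset.sum_congr rfl
          (fun i _ => by rw [abs_mul, abs_of_nonneg (hf0 i x)])
  have hA0 : ∀ x, 0 ≤ ∑ i, |b i| * f i x :=
    fun x => Finset.sum_nonneg fun i _ => mul_nonneg (abs_nonneg _) (hf0 i x)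
  have hAB : ∀ x, (∑ i, |b i| * f i x) ≤ S * (∑ i, f i x) := by
    intro x
    calc (∑ i, |b i| * f i x) ≤ ∑ i, |b i| * (∑ j, f j x) :=
          Finset.sum_le_sum fun i _ => mul_le_mul_of_nonneg_left
            (Finset.single_le_sum (fun j _ => hf0 j x) (Finset.mem_univ i)) (abs_nonneg _)
      _ = S * (∑ i, f i x) := by rw [← Finset.sum_mul, ← hSdef]
  -- the integrand g
  set g : X → ℝ := fun x => (∑ i, f i x)⁻¹ * (∑ i, b i * f i x) with hgdef
  have hgm : Measurable g := hBm.inv.mul hhm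
  have hgb : ∀ x, |g x| ≤ S := by
    intro x
    simp only [hgdef]
    rw [abs_mul, abs_inv, abs_of_pos (hBpos x)]
    calc (∑ i, f i x)⁻¹ * |∑ i, b i * f i x|
        ≤ (∑ i, f i x)⁻¹ * (S * (∑ i, f i x)) :=
          mul_le_mul_of_nonneg_left ((hhabs x).trans (hAB x)) (inv_nonneg.mpr (hBpos x).le)
      _ = S := by rw [mul_left_comm, inv_mul_cancel₀ (hBpos x).ne', mul_one]
  have hpt1 : ∀ x, |g x| ≤ 2 * F / ℓ ^ n * (∑ i, |b i| * f i x) := by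
    intro x
    simp only [hgdef]
    rw [abs_mul, abs_inv, abs_of_pos (hBpos x)]
    exact mul_le_mul (hBinvle x) (hhabs x) (abs_nonneg _) (by positivity)
  have hge : ∀ x, g x = ((∑ i, f i x)⁻¹ - c⁻¹) * (∑ i, b i * f i x)
      + c⁻¹ * (∑ i, b i * f i x) := by
    intro x; simp only [hgdef]; ring
  clear_value g
  have hgintμ : Integrable g μ := integrable_of_abs_le μ hgm hgb
  have hgintν : Integrable g ν := integrable_of_abs_le ν hgm hgb
  -- integral of A
  have hIA : ∫ x, (∑ i, |b i| * f i x) ∂μ ≤ 2 * S := by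
    rw [integral_finset_sum _ (fun i _ => (hfint i).const_mul _)]
    calc (∑ i, ∫ x, |b i| * f i x ∂μ) = ∑ i, |b i| * ∫ x, f i x ∂μ :=
          Finset.sum_congr rfl (fun i _ => integral_const_mul _ _)
      _ ≤ ∑ i, |b i| * 2 :=
          Finset.sum_le_sum fun i _ => mul_le_mul_of_nonneg_left (hγ2 i) (abs_nonneg _)
      _ = 2 * S := by rw [← Finset.sum_mul, ← hSdef]; ring
  have hIh : ∫ x, (∑ i, b i * f i x) ∂μ = 0 := by
    rw [integral_finset_sum _ (fun i _ => (hfint i).const_mul _)]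
    calc (∑ i, ∫ x, b i * f i x ∂μ) = ∑ i, b i * ∫ x, f i x ∂μ :=
          Finset.sum_congr rfl (fun i _ => integral_const_mul _ _)
      _ = 0 := horth
  -- T1 : L¹ bound on g
  have T1 : ∫ x, |g x| ∂μ ≤ 2 * F / ℓ ^ n * (2 * S) := by
    calc ∫ x, |g x| ∂μ ≤ ∫ x, 2 * F / ℓ ^ n * (∑ i, |b i| * f i x) ∂μ :=
          integral_mono hgintμ.abs (hAint.const_mul _) hpt1
      _ = 2 * F / ℓ ^ n * ∫ x, (∑ i, |b i| * f i x) ∂μ := integral_const_mul _ _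
      _ ≤ 2 * F / ℓ ^ n * (2 * S) := mul_le_mul_of_nonneg_left hIA (by positivity)
  -- T2 : bound on ∫ g dμ using orthogonality
  have T2 : |∫ x, g x ∂μ| ≤ 2 * F / ℓ ^ n * (2 * F / ℓ ^ n) * (C * (ℓ ^ n / ℓ ^ 2) / F)
      * (2 * S) := by
    obtain ⟨K, hKdef⟩ : ∃ K : ℝ,
      K = 2 * F / ℓ ^ n * (2 * F / ℓ ^ n) * (C * (ℓ ^ n / ℓ ^ 2) / F) := ⟨_, rfl⟩
    rw [← hKdef]
    have hK0 : 0 ≤ K := by rw [hKdef]; positivity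
    obtain ⟨e, hedef⟩ : ∃ e : X → ℝ,
      e = fun x => ((∑ i, f i x)⁻¹ - c⁻¹) * (∑ i, b i * f i x) := ⟨_, rfl⟩
    have hem : Measurable e := by rw [hedef]; exact (hBm.inv.sub measurable_const).mul hhm
    have hept : ∀ x, |e x| ≤ K * (∑ i, |b i| * f i x) := by
      intro x
      rw [hedef]
      simp only
      rw [abs_mul, hKdef]
      exact mul_le_mul (hinv x) (hhabs x) (abs_nonneg _) (by rw [← hKdef]; exact hK0)
    have heint : Integrable e μ :=
      Integrable.mono' (hAint.const_mul K) hem.aestronglyMeasurable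
        (ae_of_all _ fun x => by rw [Real.norm_eq_abs]; exact hept x)
    have hIg : ∫ x, g x ∂μ = ∫ x, e x ∂μ := by
      calc ∫ x, g x ∂μ = ∫ x, (e x + c⁻¹ * (∑ i, b i * f i x)) ∂μ := by
            apply integral_congr_ae (ae_of_all _ ?_)
            intro x
            rw [hedef]
            exact hge x
        _ = (∫ x, e x ∂μ) + c⁻¹ * ∫ x, (∑ i, b i * f i x) ∂μ := by
            rw [integral_add heint (hhint.const_mul _), integral_const_mul]
        _ = ∫ x, e x ∂μ := by rw [hIh]; ring
    calc |∫ x, g x ∂μ| = |∫ x, e x ∂μ| := by rw [hIg]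
      _ ≤ ∫ x, |e x| ∂μ := by
          simpa [Real.norm_eq_abs] using norm_integral_le_integral_norm (μ := μ) e
      _ ≤ ∫ x, K * (∑ i, |b i| * f i x) ∂μ :=
          integral_mono heint.abs (hAint.const_mul _) hept
      _ = K * ∫ x, (∑ i, |b i| * f i x) ∂μ := integral_const_mul _ _
      _ ≤ K * (2 * S) := mul_le_mul_of_nonneg_left hIA hK0
  -- measure comparison
  have hεC' : C' / ℓ ^ 2 ≤ C' := div_le_self hC'.le (one_le_pow₀ hℓ1)
  have hε0 : 0 < C' / ℓ ^ 2 := by positivity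
  have ha₁0 : 0 ≤ ℓ - C' / ℓ ^ 2 := by linarith [abs_nonneg Shat]
  have h1t : (ℓ - C' / ℓ ^ 2) ^ n ≤ ℓ ^ n := pow_le_pow_left₀ ha₁0 (by linarith) n
  have ht2 : ℓ ^ n ≤ (ℓ + C' / ℓ ^ 2) ^ n := pow_le_pow_left₀ hℓ0.le (by linarith) n
  have hlo : ENNReal.ofReal ((ℓ - C' / ℓ ^ 2) ^ n) • μ ≤ ν :=
    Measure.le_iff.mpr fun s hs => by
      rw [Measure.smul_apply, smul_eq_mul]; exact (hcmp s hs).1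
  have hhi : ν ≤ ENNReal.ofReal ((ℓ + C' / ℓ ^ 2) ^ n) • μ :=
    Measure.le_iff.mpr fun s hs => by
      rw [Measure.smul_apply, smul_eq_mul]; exact (hcmp s hs).2
  have Hcmp := integral_compare (pow_nonneg ha₁0 n) h1t ht2 hlo hhi hgm hgb
  -- bound on a₂ - a₁
  have hℓn1 : ℓ ^ (n - 1) = ℓ ^ n / ℓ := by
    rw [eq_div_iff hℓ0.ne', ← pow_succ, Nat.sub_add_cancel hn]
  have hpow1 : (ℓ + C' / ℓ ^ 2) ^ (n - 1) ≤ 2 ^ (n - 1) * (ℓ ^ n / ℓ) := by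
    have h2ℓ : ℓ + C' / ℓ ^ 2 ≤ 2 * ℓ := by linarith [abs_nonneg Shat]
    calc (ℓ + C' / ℓ ^ 2) ^ (n - 1) ≤ (2 * ℓ) ^ (n - 1) :=
          pow_le_pow_left₀ (by positivity) h2ℓ _
      _ = 2 ^ (n - 1) * ℓ ^ (n - 1) := mul_pow _ _ _
      _ = 2 ^ (n - 1) * (ℓ ^ n / ℓ) := by rw [hℓn1]
  have T4 : (ℓ + C' / ℓ ^ 2) ^ n - (ℓ - C' / ℓ ^ 2) ^ n
      ≤ (n : ℝ) * (2 ^ (n - 1) * (ℓ ^ n / ℓ)) * (2 * (C' / ℓ ^ 2)) := by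
    have h0 := pow_sub_pow_le' n ha₁0 (by linarith : ℓ - C' / ℓ ^ 2 ≤ ℓ + C' / ℓ ^ 2)
    have hd : (ℓ + C' / ℓ ^ 2) - (ℓ - C' / ℓ ^ 2) = 2 * (C' / ℓ ^ 2) := by ring
    calc (ℓ + C' / ℓ ^ 2) ^ n - (ℓ - C' / ℓ ^ 2) ^ n
        ≤ (n : ℝ) * (ℓ + C' / ℓ ^ 2) ^ (n - 1) * ((ℓ + C' / ℓ ^ 2) - (ℓ - C' / ℓ ^ 2)) := h0
      _ = (n : ℝ) * (ℓ + C' / ℓ ^ 2) ^ (n - 1) * (2 * (C' / ℓ ^ 2)) := by rw [hd]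
      _ ≤ (n : ℝ) * (2 ^ (n - 1) * (ℓ ^ n / ℓ)) * (2 * (C' / ℓ ^ 2)) := by
          apply mul_le_mul_of_nonneg_right
            (mul_le_mul_of_nonneg_left hpow1 (by positivity)) (by positivity)
  -- assemble
  have Hν : |∫ x, g x ∂ν|
      ≤ (n : ℝ) * (2 ^ (n - 1) * (ℓ ^ n / ℓ)) * (2 * (C' / ℓ ^ 2)) * (2 * F / ℓ ^ n * (2 * S))
        + ℓ ^ n * (2 * F / ℓ ^ n * (2 * F / ℓ ^ n) * (C * (ℓ ^ n / ℓ ^ 2) / F) * (2 * S)) := by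
    calc |∫ x, g x ∂ν|
        = |(∫ x, g x ∂ν - ℓ ^ n * ∫ x, g x ∂μ) + ℓ ^ n * ∫ x, g x ∂μ| := by
          rw [sub_add_cancel]
      _ ≤ |∫ x, g x ∂ν - ℓ ^ n * ∫ x, g x ∂μ| + |ℓ ^ n * ∫ x, g x ∂μ| := abs_add_le _ _
      _ ≤ ((ℓ + C' / ℓ ^ 2) ^ n - (ℓ - C' / ℓ ^ 2) ^ n) * ∫ x, |g x| ∂μ
            + ℓ ^ n * |∫ x, g x ∂μ| := by
          rw [abs_mul, abs_of_pos hu]; exact add_le_add Hcmp le_rfl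
      _ ≤ (n : ℝ) * (2 ^ (n - 1) * (ℓ ^ n / ℓ)) * (2 * (C' / ℓ ^ 2))
            * (2 * F / ℓ ^ n * (2 * S))
            + ℓ ^ n * (2 * F / ℓ ^ n * (2 * F / ℓ ^ n) * (C * (ℓ ^ n / ℓ ^ 2) / F) * (2 * S)) :=
          add_le_add
            (mul_le_mul T4 T1 (integral_nonneg fun x => abs_nonneg _) (by positivity))
            (mul_le_mul_of_nonneg_left T2 hu.le)
  have h2n : (2:ℝ) ^ n = 2 * 2 ^ (n - 1) := by
    rw [← pow_succ', Nat.sub_add_cancel hn]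
  have hB1 : (n : ℝ) * (2 ^ (n - 1) * (ℓ ^ n / ℓ)) * (2 * (C' / ℓ ^ 2))
      * (2 * F / ℓ ^ n * (2 * S)) = 4 * F * n * 2 ^ n * C' * S / ℓ ^ 3 := by
    rw [h2n]
    field_simp
    ring
  have hB2 : ℓ ^ n * (2 * F / ℓ ^ n * (2 * F / ℓ ^ n) * (C * (ℓ ^ n / ℓ ^ 2) / F) * (2 * S))
      = 8 * F * C * S / ℓ ^ 2 := by
    field_simp
    ring
  rw [hB1, hB2] at Hν
  rw [abs_mul, abs_of_pos (div_pos hℓ0 hS)]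
  have hfin : ℓ / S * |∫ x, g x ∂ν|
      ≤ ℓ / S * (4 * F * n * 2 ^ n * C' * S / ℓ ^ 3 + 8 * F * C * S / ℓ ^ 2) :=
    mul_le_mul_of_nonneg_left Hν (by positivity)
  have heq : ℓ / S * (4 * F * n * 2 ^ n * C' * S / ℓ ^ 3 + 8 * F * C * S / ℓ ^ 2)
      = 4 * F * n * 2 ^ n * C' / ℓ ^ 2 + 8 * F * C / ℓ := by
    field_simp
  have hle2 : 4 * F * (n : ℝ) * 2 ^ n * C' / ℓ ^ 2 ≤ 4 * F * n * 2 ^ n * C' / ℓ := by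
    apply div_le_div_of_nonneg_left (by positivity) hℓ0
    nlinarith
  calc ℓ / S * |∫ x, g x ∂ν|
      ≤ 4 * F * n * 2 ^ n * C' / ℓ ^ 2 + 8 * F * C / ℓ := by rw [← heq]; exact hfin
    _ ≤ 4 * F * n * 2 ^ n * C' / ℓ + 8 * F * C / ℓ := add_le_add hle2 le_rfl
    _ = (8 * F * C + 4 * F * n * 2 ^ n * C') / ℓ := by ring
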